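/- arXiv:2302.08697 — 3 statements merged into one kernel-verified Lean document; each statement's English description precedes it below -/
import Mathlib

section
/- If d1 is monotonically decreasing (i.e., (a-b)(d1(a)-d1(b)) ≤ 0 for all a,b in its domain), then along trajectories of the closed-loop system with PI control u = -K_P y_N(x) - K_I x_c, ẋ_c = y_N(x), the Lyapunov function V(x̃, x̃_c) = ½ x̃ᵀ Q x̃ + (K_I/2) x̃_c² satisfies V̇ ≤ -θ1 x̃2² - θ2 x̃3² - K_P y_N(x)² ≤ 0, where x̃_c = x_c - x_c⋆ and x_c⋆ = -u⋆/K_I. -/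
open Matrix

theorem pi_pbc_lyapunov_decrease
    (Cfc L C θ1 θ2 KP KI : ℝ) (hCfc : 0 < Cfc) (hL : 0 < L) (hC : 0 < C)
    (hθ1 : 0 ≤ θ1) (hθ2 : 0 ≤ θ2) (hKP : 0 < KP) (hKI : 0 < KI)
    (Q J0 J1 R : Matrix (Fin 3) (Fin 3) ℝ)
    (hQ : Q = Matrix.diagonal ![Cfc, L, C])
    (hJ0 : J0 = !![0, -1, 0; 1, 0, 0; 0, 0, 0])
    (hJ1 : J1 = !![0, 0, 0; 0, 0, -1; 0, 1, 0])
    (hR : R = Matrix.diagonal ![0, θ1, θ2])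
    (d1 : ℝ → ℝ)
    (hmono : ∀ a b : ℝ, (a - b) * (d1 a - d1 b) ≤ 0)
    (d : ℝ → Fin 3 → ℝ) (hd : ∀ a, d a = ![d1 a, 0, 0])
    (us : ℝ) (xs : Fin 3 → ℝ)
    (yN : (Fin 3 → ℝ) → ℝ) (hyN : ∀ z, yN z = xs 1 * z 2 - xs 2 * z 1)
    (x x' : ℝ → Fin 3 → ℝ) (xc : ℝ → ℝ)
    (u : ℝ → ℝ) (hu : ∀ t, u t = -KP * yN (x t) - KI * xc t)
    (hx : ∀ t i, HasDerivAt (fun s => x s i) (x' t i) t)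
    (hxc : ∀ t, HasDerivAt xc (yN (x t)) t)
    (hdyn : ∀ t, Q.mulVec (x' t) = (J0 + u t • J1 - R).mulVec (x t) + d (x t 0))
    (heq : (J0 + us • J1 - R).mulVec xs + d (xs 0) = 0)
    (xcs : ℝ) (hxcs : xcs = -us / KI)
    (V : ℝ → ℝ)
    (hV : ∀ t, V t = (1 / 2) * ((x t - xs) ⬝ᵥ Q.mulVec (x t - xs))
          + (KI / 2) * (xc t - xcs) ^ 2) :
    ∀ t v', HasDerivAt V v' t →
      v' ≤ -θ1 * (x t 1 - xs 1) ^ 2 - θ2 * (x t 2 - xs 2) ^ 2 - KP * (yN (x t)) ^ 2 ∧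
      -θ1 * (x t 1 - xs 1) ^ 2 - θ2 * (x t 2 - xs 2) ^ 2 - KP * (yN (x t)) ^ 2 ≤ 0 := by
  intro t v' hv'
  -- explicit form of V
  have hVe : V = fun s => (1/2) * (Cfc * (x s 0 - xs 0)^2 + L * (x s 1 - xs 1)^2
      + C * (x s 2 - xs 2)^2) + (KI/2) * (xc s - xcs)^2 := by
    funext s
    rw [hV, hQ]
    simp [dotProduct, Matrix.mulVec_diagonal, Fin.sum_univ_three]
    ring
  -- derivative of V
  have hd0 := (hx t 0).sub_const (xs 0)
  have hd1 := (hx t 1).sub_const (xs 1)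
  have hd2 := (hx t 2).sub_const (xs 2)
  have hdc := (hxc t).sub_const xcs
  have H : HasDerivAt V
      (Cfc * (x t 0 - xs 0) * x' t 0 + L * (x t 1 - xs 1) * x' t 1
        + C * (x t 2 - xs 2) * x' t 2 + KI * (xc t - xcs) * yN (x t)) t := by
    rw [hVe]
    have := ((((hd0.pow 2).const_mul Cfc).add ((hd1.pow 2).const_mul L)).add
        ((hd2.pow 2).const_mul C)).const_mul (1/2) |>.add ((hdc.pow 2).const_mul (KI/2))
    refine this.congr_deriv ?_
    ring
  have hv'eq := hv'.unique H
  -- componentwise dynamics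
  have h0 : Cfc * x' t 0 = -(x t 1) + d1 (x t 0) := by
    have := congrFun (hdyn t) 0
    simpa [hQ, hJ0, hJ1, hR, hd, Matrix.mulVec, dotProduct, Fin.sum_univ_three] using this
  have h1 : L * x' t 1 = x t 0 - u t * x t 2 - θ1 * x t 1 := by
    have := congrFun (hdyn t) 1
    simp [hQ, hJ0, hJ1, hR, hd, Matrix.mulVec, dotProduct, Fin.sum_univ_three] at this
    linarith
  have h2 : C * x' t 2 = u t * x t 1 - θ2 * x t 2 := by
    have := congrFun (hdyn t) 2
    simp [hQ, hJ0, hJ1, hR, hd, Matrix.mulVec, dotProduct, Fin.sum_univ_three] at this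
    linarith
  -- equilibrium equations
  have e0 : -(xs 1) + d1 (xs 0) = 0 := by
    have := congrFun heq 0
    simpa [hJ0, hJ1, hR, hd, Matrix.mulVec, dotProduct, Fin.sum_univ_three] using this
  have e1 : xs 0 - us * xs 2 - θ1 * xs 1 = 0 := by
    have := congrFun heq 1
    simp [hJ0, hJ1, hR, hd, Matrix.mulVec, dotProduct, Fin.sum_univ_three] at this
    linarith
  have e2 : us * xs 1 - θ2 * xs 2 = 0 := by
    have := congrFun heq 2
    simp [hJ0, hJ1, hR, hd, Matrix.mulVec, dotProduct, Fin.sum_univ_three] at this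
    linarith
  have hKIxcs : KI * xcs = -us := by
    rw [hxcs]; field_simp
  rw [hu t, hyN] at h1 h2
  rw [hyN] at hv'eq ⊢
  have key : v' = (x t 0 - xs 0) * (d1 (x t 0) - d1 (xs 0))
      - θ1 * (x t 1 - xs 1)^2 - θ2 * (x t 2 - xs 2)^2
      - KP * (xs 1 * x t 2 - xs 2 * x t 1)^2 := by
    linear_combination hv'eq + (x t 0 - xs 0) * h0 + (x t 1 - xs 1) * h1
      + (x t 2 - xs 2) * h2 + (x t 0 - xs 0) * e0 + (x t 1 - xs 1) * e1
      + (x t 2 - xs 2) * e2 - (xs 1 * x t 2 - xs 2 * x t 1) * hKIxcs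
  have hm := hmono (x t 0) (xs 0)
  have h1n := mul_nonneg hθ1 (sq_nonneg (x t 1 - xs 1))
  have h2n := mul_nonneg hθ2 (sq_nonneg (x t 2 - xs 2))
  have h3n := mul_nonneg hKP.le (sq_nonneg (xs 1 * x t 2 - xs 2 * x t 1))
  constructor <;> linarith
end

section
/- For the I&I estimator with state z1 satisfying ż1 = k1 x2 (x1 - z1 x2 + (k1/2) L x2³ - x3 u) and output θ̂1 = z1 - (k1/2) L x2², where x2 satisfies L ẋ2 = x1 - θ1 x2 - x3 u, the estimation error θ̃1 = θ̂1 - θ1 satisfies θ̃̇1 = -k1 x2² θ̃1. -/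
theorem ii_estimator_theta1
    (k1 L θ1 : ℝ) (hk1 : 0 < k1) (hL : 0 < L)
    (x1 x2 x3 u z1 x2' : ℝ → ℝ)
    (hx2 : ∀ t, HasDerivAt x2 (x2' t) t)
    (hdyn : ∀ t, L * x2' t = x1 t - θ1 * x2 t - x3 t * u t)
    (hz1 : ∀ t, HasDerivAt z1
      (k1 * x2 t * (x1 t - z1 t * x2 t + (k1 / 2) * L * (x2 t) ^ 3 - x3 t * u t)) t)
    (θhat1 : ℝ → ℝ) (hθhat1 : ∀ t, θhat1 t = z1 t - (k1 / 2) * L * (x2 t) ^ 2) :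
    ∀ t, HasDerivAt (fun s => θhat1 s - θ1) (-k1 * (x2 t) ^ 2 * (θhat1 t - θ1)) t := by
  intro t
  have hfun : (fun s => θhat1 s - θ1) = fun s => z1 s - (k1 / 2) * L * (x2 s) ^ 2 - θ1 := by
    funext s; rw [hθhat1 s]
  rw [hfun]
  have h := (((hz1 t).sub (((hx2 t).pow 2).const_mul ((k1 / 2) * L))).sub_const θ1)
  convert h using 1
  case e'_4 => rfl
  case e'_5 => rfl
  case e'_8 => rfl
  have hd := hdyn t
  rw [hθhat1 t]
  push_cast
  linear_combination (k1 * x2 t) * hd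
end

section
/- For the I&I estimator with state z2 satisfying ż2 = k2 x3 (x2 u - z2 x3 + (k2/2) C x3³) and output θ̂2 = z2 - (k2/2) C x3², where x3 satisfies C ẋ3 = -θ2 x3 + x2 u, the estimation error θ̃2 = θ̂2 - θ2 satisfies θ̃̇2 = -k2 x3² θ̃2. -/
theorem ii_estimator_theta2
    (k2 C θ2 : ℝ) (hk2 : 0 < k2) (hC : 0 < C)
    (x2 x3 u z2 x3' : ℝ → ℝ)
    (hx3 : ∀ t, HasDerivAt x3 (x3' t) t)
    (hdyn : ∀ t, C * x3' t = -θ2 * x3 t + x2 t * u t)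
    (hz2 : ∀ t, HasDerivAt z2
      (k2 * x3 t * (x2 t * u t - z2 t * x3 t + (k2 / 2) * C * (x3 t) ^ 3)) t)
    (θhat2 : ℝ → ℝ) (hθhat2 : ∀ t, θhat2 t = z2 t - (k2 / 2) * C * (x3 t) ^ 2) :
    ∀ t, HasDerivAt (fun s => θhat2 s - θ2) (-k2 * (x3 t) ^ 2 * (θhat2 t - θ2)) t := by
  intro t
  have hfun : (fun s => θhat2 s - θ2) = (fun s => z2 s - (k2 / 2) * C * (x3 s) ^ 2 - θ2) := by
    funext s; rw [hθhat2 s]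
  rw [hfun, hθhat2 t]
  have h := ((hz2 t).sub (((hx3 t).pow 2).const_mul ((k2 / 2) * C))).sub_const θ2
  convert h using 1
  case e'_4 => rfl
  case e'_5 => rfl
  case e'_8 => rfl
  have hd := hdyn t
  push_cast
  linear_combination (k2 * x3 t) * hd
end
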